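/- Let X be a compact Hausdorff space, A a unital C*-algebra with a unital C(X)-structure ι : C(X,ℂ) → A, x ∈ X, and let φ be a state on A such that φ(ι f) = f(x) for every f ∈ C(X,ℂ). Then φ vanishes on the ideal I_x, i.e. φ(a) = 0 for every a ∈ I_x. -/

import Mathlib

variable {X : Type*} [TopologicalSpace X] [CompactSpace X] [T2Space X]
variable {A : Type*} [CStarAlgebra A]

/-- A state on a unital C*-algebra `A`: a linear functional `φ : A → ℂ` with `φ 1 = 1`
and `φ (a* a) ≥ 0` (a nonnegative real number) for every `a`. -/
def IsState (φ : A → ℂ) : Prop :=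
  φ 1 = 1 ∧ ∀ a : A, ∃ r : ℝ, 0 ≤ r ∧ φ (star a * a) = (r : ℂ)

/-- `fiberIdeal ι x` is the smallest closed two-sided ideal `I_x` of `A` containing
`{ι f : f ∈ C(X,ℂ), f x = 0}`: the intersection of all closed two-sided ideals
containing that set. -/
def fiberIdeal (ι : C(X, ℂ) →⋆ₐ[ℂ] A) (x : X) : Set A :=
  ⋂₀ {S : Set A | IsClosed S ∧ (∃ I : TwoSidedIdeal A, (I : Set A) = S) ∧
      {a : A | ∃ f : C(X, ℂ), f x = 0 ∧ a = ι f} ⊆ S}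

lemma state_herm (φ : A →ₗ[ℂ] ℂ) (hφ : IsState (⇑φ))
    (a b : A) : (starRingEnd ℂ) (φ (star b * a)) = φ (star a * b) := by
  obtain ⟨r0, -, h0⟩ := hφ.2 a
  obtain ⟨r1, -, h1⟩ := hφ.2 b
  obtain ⟨s, -, hs⟩ := hφ.2 (a + b)
  obtain ⟨t, -, ht⟩ := hφ.2 (a + Complex.I • b)
  have e1 : φ (star (a + b) * (a + b))
      = φ (star a * a) + φ (star a * b) + φ (star b * a) + φ (star b * b) := by
    simp only [star_add, add_mul, mul_add, map_add]; ring
  have e2 : φ (star (a + Complex.I • b) * (a + Complex.I • b))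
      = φ (star a * a) + Complex.I * φ (star a * b) - Complex.I * φ (star b * a)
        + φ (star b * b) := by
    simp only [star_add, star_smul, add_mul, mul_add, map_add, smul_mul_assoc, mul_smul_comm,
      map_smul, smul_eq_mul, Complex.star_def, Complex.conj_I]
    linear_combination (-(φ (star b * b))) * Complex.I_sq
  rw [hs] at e1; rw [ht] at e2; rw [h0, h1] at e1 e2
  have i1 := congrArg Complex.im e1
  have i2 := congrArg Complex.im e2
  simp only [Complex.add_im, Complex.sub_im, Complex.mul_im, Complex.I_re, Complex.I_im,
    Complex.ofReal_im, Complex.ofReal_re, zero_mul, one_mul, mul_zero, zero_add, add_zero] at i1 i2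
  apply Complex.ext <;>
    simp only [Complex.conj_re, Complex.conj_im, Complex.neg_im, neg_neg] <;> linarith

/-- The pre-inner-product space core coming from a state. -/
noncomputable def stateCore (φ : A →ₗ[ℂ] ℂ) (hφ : IsState (⇑φ)) :
    PreInnerProductSpace.Core ℂ A where
  inner a b := φ (star a * b)
  conj_inner_symm a b := state_herm φ hφ a b
  re_inner_nonneg a := by
    obtain ⟨r, hr, h⟩ := hφ.2 a
    simpa [h] using hr
  add_left x y z := by simp only [star_add, add_mul, map_add]
  smul_left x y r := by
    simp only [star_smul, smul_mul_assoc, map_smul, smul_eq_mul, Complex.star_def]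

lemma state_cs_zero (φ : A →ₗ[ℂ] ℂ) (hφ : IsState (⇑φ))
    {z : A} (hz : φ (star z * z) = 0) (y : A) : φ (star y * z) = 0 := by
  letI c : PreInnerProductSpace.Core ℂ A := stateCore φ hφ
  have h : ‖φ (star y * z)‖ * ‖φ (star z * y)‖
      ≤ RCLike.re (φ (star y * y)) * RCLike.re (φ (star z * z)) :=
    InnerProductSpace.Core.inner_mul_inner_self_le (𝕜 := ℂ) (F := A) y z
  rw [hz] at h
  have hc : φ (star z * y) = (starRingEnd ℂ) (φ (star y * z)) := (state_herm φ hφ z y).symm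
  rw [hc, RCLike.norm_conj] at h
  simp only [map_zero, mul_zero] at h
  have := norm_nonneg (φ (star y * z))
  have h0 : ‖φ (star y * z)‖ = 0 := by nlinarith
  exact norm_eq_zero.mp h0

lemma state_nonneg [PartialOrder A] [StarOrderedRing A] (φ : A →ₗ[ℂ] ℂ) (hφ : IsState (⇑φ))
    {q : A} (hq : (0 : A) ≤ q) : ∃ r : ℝ, 0 ≤ r ∧ φ q = (r : ℂ) := by
  rw [StarOrderedRing.nonneg_iff] at hq
  induction hq using AddSubmonoid.closure_induction with
  | mem s hs =>
    obtain ⟨c, rfl⟩ := hs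
    exact hφ.2 c
  | zero => exact ⟨0, le_rfl, by simp⟩
  | add u v _ _ hu hv =>
    obtain ⟨ru, hru, hu'⟩ := hu
    obtain ⟨rv, hrv, hv'⟩ := hv
    exact ⟨ru + rv, by positivity, by rw [map_add, hu', hv', Complex.ofReal_add]⟩

lemma state_bound (φ : A →ₗ[ℂ] ℂ) (hφ : IsState (⇑φ)) (a : A) : ‖φ a‖ ≤ ‖a‖ := by
  obtain ⟨r, hr, hra⟩ := hφ.2 a
  -- Cauchy-Schwarz with y = 1, z = a
  letI c : PreInnerProductSpace.Core ℂ A := stateCore φ hφ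
  have h : ‖φ (star (1 : A) * a)‖ * ‖φ (star a * (1 : A))‖
      ≤ RCLike.re (φ (star (1 : A) * (1 : A))) * RCLike.re (φ (star a * a)) :=
    InnerProductSpace.Core.inner_mul_inner_self_le (𝕜 := ℂ) (F := A) 1 a
  have hc : φ (star a * (1 : A)) = (starRingEnd ℂ) (φ (star (1 : A) * a)) :=
    (state_herm φ hφ a 1).symm
  rw [hc, RCLike.norm_conj] at h
  simp only [star_one, one_mul, mul_one, hφ.1, hra] at h
  have h2 : ‖φ a‖ * ‖φ a‖ ≤ r := by simpa using h
  -- now bound r by ‖a‖ ^ 2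
  letI : PartialOrder A := CStarAlgebra.spectralOrder A
  haveI : StarOrderedRing A := CStarAlgebra.spectralOrderedRing A
  set p : A := star a * a with hp
  have hpsa : IsSelfAdjoint p := IsSelfAdjoint.star_mul_self a
  have hle : p ≤ algebraMap ℝ A ‖p‖ := hpsa.le_algebraMap_norm_self
  set q : A := algebraMap ℝ A ‖p‖ - p with hq
  have hqnn : (0 : A) ≤ q := sub_nonneg.mpr hle
  obtain ⟨r', hr', hqr⟩ := state_nonneg φ hφ hqnn
  have hmap : φ (algebraMap ℝ A ‖p‖) = (‖p‖ : ℂ) := by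
    rw [IsScalarTower.algebraMap_apply ℝ ℂ A, Algebra.algebraMap_eq_smul_one, map_smul,
      hφ.1, smul_eq_mul, mul_one]
    rfl
  have hqφ : φ q = (‖p‖ : ℂ) - (r : ℂ) := by
    rw [hq, map_sub, hmap, hra]
  rw [hqφ] at hqr
  have hre : ‖p‖ - r = r' := by
    have := congrArg Complex.re hqr
    simpa using this
  have hnp : ‖p‖ ≤ ‖a‖ * ‖a‖ := by
    calc ‖p‖ ≤ ‖star a‖ * ‖a‖ := norm_mul_le _ _
    _ = ‖a‖ * ‖a‖ := by rw [norm_star]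
  have := norm_nonneg a
  nlinarith

/-- If `φ` is a state on `A` with `φ (ι f) = f x` for all `f ∈ C(X,ℂ)`,
then `φ` vanishes on the fibre ideal `I_x`. -/
theorem stmt10 (ι : C(X, ℂ) →⋆ₐ[ℂ] A)
    (hcentral : ∀ (f : C(X, ℂ)) (a : A), ι f * a = a * ι f)
    (x : X) (φ : A →ₗ[ℂ] ℂ) (hφ : IsState (⇑φ))
    (hφx : ∀ f : C(X, ℂ), φ (ι f) = f x) :
    ∀ a ∈ fiberIdeal ι x, φ a = 0 := by
  intro a ha
  have hcont : Continuous (⇑φ) :=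
    AddMonoidHomClass.continuous_of_bound φ.toAddMonoidHom 1 fun z => by
      simpa using state_bound φ hφ z
  set S : Set A := {a : A | ∀ b c : A, φ (b * a * c) = 0} with hSdef
  have hmemS : a ∈ S := by
    refine ha S ⟨?_, ?_, ?_⟩
    · -- closed
      have : S = ⋂ (b : A) (c : A), {a : A | φ (b * a * c) = 0} := by
        ext y; simp [hSdef, Set.mem_iInter]
      rw [this]
      refine isClosed_iInter fun b => isClosed_iInter fun c => ?_
      exact isClosed_eq
        (hcont.comp ((continuous_const.mul continuous_id).mul continuous_const))
        continuous_const
    · -- two-sided ideal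
      refine ⟨TwoSidedIdeal.mk' S (by simp [hSdef])
        (fun {u v} hu hv b c => by
          simp only [hSdef, Set.mem_setOf_eq] at hu hv
          rw [mul_add, add_mul, map_add, hu b c, hv b c, add_zero])
        (fun {u} hu b c => by
          simp only [hSdef, Set.mem_setOf_eq] at hu
          rw [mul_neg, neg_mul, map_neg, hu b c, neg_zero])
        (fun {u v} hv b c => by
          simp only [hSdef, Set.mem_setOf_eq] at hv
          rw [show b * (u * v) * c = (b * u) * v * c by simp only [mul_assoc]]
          exact hv (b * u) c)
        (fun {u v} hu b c => by
          simp only [hSdef, Set.mem_setOf_eq] at hu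
          rw [show b * (u * v) * c = b * u * (v * c) by simp only [mul_assoc]]
          exact hu b (v * c)), ?_⟩
      exact TwoSidedIdeal.coe_mk' S _ _ _ _ _
    · -- contains generators
      rintro y ⟨f, hfx, rfl⟩
      intro b c
      have hz : φ (star (ι f) * ι f) = 0 := by
        rw [← map_star, ← map_mul, hφx]
        simp [hfx]
      have key : φ (star (star (b * c)) * ι f) = 0 := state_cs_zero φ hφ hz (star (b * c))
      rw [star_star] at key
      calc φ (b * ι f * c) = φ (b * c * ι f) := by
            rw [mul_assoc, hcentral f c, ← mul_assoc]
      _ = 0 := key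
  simpa using hmemS 1 1
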